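/- Let μ : [0,1] → (0,∞) be continuous and define k(s) = ∫_0^1 (s^{-α}/Γ(1−α)) μ(α) dα for s > 0 (with 1/Γ(1−α) interpreted as 0 at α = 1). Then for every λ > 0, the Laplace transform of k satisfies ∫_0^∞ e^{-λs} k(s) ds = ∫_0^1 λ^{α−1} μ(α) dα. -/

import Mathlib

open MeasureTheory Real Filter Set

lemma aux_gamma_pos {α : ℝ} (hα : α ∈ Ioo (0:ℝ) 1) : 0 < Real.Gamma (1 - α) :=
  Real.Gamma_pos_of_pos (by linarith [hα.2])

lemma aux_integrable {l α : ℝ} (hl : 0 < l) (hα : α ∈ Ioo (0:ℝ) 1) :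
    IntegrableOn (fun s : ℝ => s ^ (-α) * Real.exp (-(l * s))) (Ioi 0) := by
  have := integrableOn_rpow_mul_exp_neg_mul_rpow (p := 1) (s := -α) (b := l)
    (by linarith [hα.2]) one_pos hl
  simpa [Real.rpow_one, neg_mul] using this

lemma aux_integral {l α : ℝ} (hl : 0 < l) (hα : α ∈ Ioo (0:ℝ) 1) :
    ∫ s in Ioi (0:ℝ), s ^ (-α) * Real.exp (-(l * s))
      = l ^ (α - 1) * Real.Gamma (1 - α) := by
  have h := Real.integral_rpow_mul_exp_neg_mul_Ioi (a := 1 - α) (r := l)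
    (by linarith [hα.2]) hl
  have h1 : (1:ℝ) - α - 1 = -α := by ring
  rw [h1] at h
  rw [h]
  congr 1
  rw [show α - 1 = -(1 - α) by ring, Real.rpow_neg hl.le, one_div,
    Real.inv_rpow hl.le]

theorem laplace_transform_distributed_order_kernel
    (μ : ℝ → ℝ) (hμ_cont : ContinuousOn μ (Icc 0 1))
    (hμ_pos : ∀ α ∈ Icc (0:ℝ) 1, 0 < μ α)
    (k : ℝ → ℝ)
    (hk : ∀ s : ℝ, 0 < s →
      k s = ∫ α in (0:ℝ)..1, s ^ (-α) / Real.Gamma (1 - α) * μ α) :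
    ∀ l : ℝ, 0 < l →
      ∫ s in Ioi (0:ℝ), Real.exp (-l * s) * k s = ∫ α in (0:ℝ)..1, l ^ (α - 1) * μ α := by
  intro l hl
  set f : ℝ → ℝ → ℝ :=
    fun s α => Real.exp (-(l * s)) * (s ^ (-α) / Real.Gamma (1 - α) * μ α) with hf
  -- value of the inner integral
  have hval : ∀ α ∈ Ioo (0:ℝ) 1,
      ∫ s in Ioi (0:ℝ), f s α = l ^ (α - 1) * μ α := by
    intro α hα
    have hΓ : Real.Gamma (1 - α) ≠ 0 := (aux_gamma_pos hα).ne'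
    have : ∫ s in Ioi (0:ℝ), f s α
        = ∫ s in Ioi (0:ℝ), (s ^ (-α) * Real.exp (-(l * s))) * (μ α / Real.Gamma (1 - α)) := by
      refine setIntegral_congr_fun measurableSet_Ioi fun s hs => ?_
      simp only [hf]; ring
    rw [this, integral_mul_const, aux_integral hl hα]
    field_simp
  -- continuity / measurability of the two-variable function
  have hcontOn : ContinuousOn (Function.uncurry f) (Ioi 0 ×ˢ Ioo 0 1) := by
    have h1 : ContinuousOn (fun p : ℝ × ℝ => Real.exp (-(l * p.1))) (Ioi 0 ×ˢ Ioo 0 1) :=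
      (Real.continuous_exp.comp ((continuous_const.mul continuous_fst).neg)).continuousOn
    have h2 : ContinuousOn (fun p : ℝ × ℝ => p.1 ^ (-p.2)) (Ioi 0 ×ˢ Ioo 0 1) := by
      apply ContinuousOn.rpow continuous_fst.continuousOn continuous_snd.neg.continuousOn
      intro p hp
      exact Or.inl (ne_of_gt hp.1)
    have h3 : ContinuousOn (fun p : ℝ × ℝ => Real.Gamma (1 - p.2)) (Ioi 0 ×ˢ Ioo 0 1) := by
      intro p hp
      have hpos : 0 < 1 - p.2 := by linarith [hp.2.2]
      have : ContinuousAt (fun p : ℝ × ℝ => Real.Gamma (1 - p.2)) p := by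
        have hd : DifferentiableAt ℝ Real.Gamma (1 - p.2) := by
          refine Real.differentiableAt_Gamma fun m => ?_
          have : (0:ℝ) < 1 - p.2 := hpos
          have hm : (-(m:ℝ)) ≤ 0 := neg_nonpos.mpr (Nat.cast_nonneg m)
          intro h; rw [h] at this; linarith
        exact ContinuousAt.comp (g := Real.Gamma) (f := fun p : ℝ × ℝ => 1 - p.2)
          hd.continuousAt (continuous_const.sub continuous_snd).continuousAt
      exact this.continuousWithinAt
    have h4 : ContinuousOn (fun p : ℝ × ℝ => μ p.2) (Ioi 0 ×ˢ Ioo 0 1) := by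
      refine hμ_cont.comp continuous_snd.continuousOn fun p hp => ?_
      exact ⟨hp.2.1.le, hp.2.2.le⟩
    have hΓne : ∀ p ∈ Ioi (0:ℝ) ×ˢ Ioo (0:ℝ) 1, Real.Gamma (1 - p.2) ≠ 0 :=
      fun p hp => (aux_gamma_pos hp.2).ne'
    exact (h1.mul (((h2.div h3 hΓne)).mul h4))
  have hmeas : AEStronglyMeasurable (Function.uncurry f)
      ((volume.restrict (Ioi 0)).prod (volume.restrict (Ioo 0 1))) := by
    rw [Measure.prod_restrict]
    exact hcontOn.aestronglyMeasurable (measurableSet_Ioi.prod measurableSet_Ioo)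
  -- integrability on the product
  have hint : Integrable (Function.uncurry f)
      ((volume.restrict (Ioi 0)).prod (volume.restrict (Ioo 0 1))) := by
    rw [integrable_prod_iff' hmeas]
    constructor
    · refine (ae_restrict_iff' measurableSet_Ioo).2 (ae_of_all _ fun α hα => ?_)
      have hΓ : Real.Gamma (1 - α) ≠ 0 := (aux_gamma_pos hα).ne'
      have := (aux_integrable hl hα).mul_const (μ α / Real.Gamma (1 - α))
      refine this.congr (ae_of_all _ fun s => ?_)
      simp only [Function.uncurry, hf]; ring
    · -- the function α ↦ ∫ s, ‖f s α‖ equals l^(α-1) * μ α on Ioo 0 1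
      have hG : IntegrableOn (fun α => l ^ (α - 1) * μ α) (Ioo 0 1) := by
        have hc : ContinuousOn (fun α => l ^ (α - 1) * μ α) (Icc 0 1) := by
          refine ContinuousOn.mul ?_ hμ_cont
          exact (Continuous.rpow continuous_const (continuous_id.sub continuous_const)
            (fun _ => Or.inl hl.ne')).continuousOn
        exact (hc.integrableOn_Icc).mono_set Ioo_subset_Icc_self
      refine hG.congr ?_
      filter_upwards [ae_restrict_mem measurableSet_Ioo] with α hα
      have hnorm : ∫ s in Ioi (0:ℝ), ‖Function.uncurry f (s, α)‖
          = ∫ s in Ioi (0:ℝ), f s α := by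
        refine setIntegral_congr_fun measurableSet_Ioi fun s hs => ?_
        have hs0 : (0:ℝ) < s := hs
        have hpos : 0 ≤ f s α := by
          have h1 : 0 < s ^ (-α) := Real.rpow_pos_of_pos hs0 _
          have h2 : 0 < Real.Gamma (1 - α) := aux_gamma_pos hα
          have h3 : 0 < μ α := hμ_pos α ⟨hα.1.le, hα.2.le⟩
          have := Real.exp_pos (-(l * s))
          positivity
        simpa [Function.uncurry] using Real.norm_of_nonneg hpos
      rw [hnorm, hval α hα]
  -- now put everything together
  have hLHS : ∫ s in Ioi (0:ℝ), Real.exp (-l * s) * k s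
      = ∫ s in Ioi (0:ℝ), ∫ α in Ioo (0:ℝ) 1, f s α := by
    refine setIntegral_congr_fun measurableSet_Ioi fun s hs => ?_
    rw [hk s hs, intervalIntegral.integral_of_le zero_le_one,
      MeasureTheory.integral_Ioc_eq_integral_Ioo, ← MeasureTheory.integral_const_mul]
    refine setIntegral_congr_fun measurableSet_Ioo fun α hα => ?_
    simp only [hf, neg_mul]
  rw [hLHS, MeasureTheory.integral_integral_swap hint,
    intervalIntegral.integral_of_le zero_le_one,
    MeasureTheory.integral_Ioc_eq_integral_Ioo]
  exact setIntegral_congr_fun measurableSet_Ioo hval
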